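/- For any a ≥ 0 and integer t ≥ 3, the maximum of E(δ) − a·δ over δ ∈ [1/t, 1) is attained at δ = 1/s for some integer s ∈ {3,…,t}, where E(δ) := ((⌊1/δ⌋+1)δ − 1)·log₂⌊1/δ⌋ + (1 − ⌊1/δ⌋·δ)·log₂(⌊1/δ⌋+1). -/

import Mathlib

/-- The exponent function `E(δ)` of Byskov's bound. -/
noncomputable def Efun (δ : ℝ) : ℝ :=
  (((⌊1/δ⌋ : ℝ) + 1) * δ - 1) * Real.logb 2 (⌊1/δ⌋ : ℝ)
    + (1 - (⌊1/δ⌋ : ℝ) * δ) * Real.logb 2 ((⌊1/δ⌋ : ℝ) + 1)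

lemma Efun_inv (s : ℕ) (hs : 1 ≤ s) : Efun (1 / (s:ℝ)) = Real.logb 2 s / s := by
  have hs0 : (0:ℝ) < s := by exact_mod_cast hs
  have h1 : (1:ℝ) / (1 / (s:ℝ)) = (s:ℝ) := one_div_one_div _
  unfold Efun
  rw [h1, Int.floor_natCast]
  push_cast
  field_simp
  ring

lemma piece (a : ℝ) (n : ℕ) (hn : 1 ≤ n) (δ : ℝ)
    (h1 : 1 / ((n:ℝ)+1) < δ) (h2 : δ ≤ 1 / (n:ℝ)) :
    Efun δ - a * δ ≤
      max (Efun (1/(((n:ℕ)+1:ℕ):ℝ)) - a * (1/(((n:ℕ)+1:ℕ):ℝ)))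
        (Efun (1/((n:ℕ):ℝ)) - a * (1/((n:ℕ):ℝ))) := by
  have hn0 : (0:ℝ) < n := by exact_mod_cast hn
  have hn1 : (0:ℝ) < (n:ℝ) + 1 := by positivity
  have hδ0 : 0 < δ := lt_trans (by positivity) h1
  -- floor computation
  have hnδ : (n:ℝ) * δ ≤ 1 := by
    have := mul_le_mul_of_nonneg_left h2 hn0.le
    rwa [mul_one_div, div_self hn0.ne'] at this
  have hnδ' : 1 < ((n:ℝ) + 1) * δ := by
    have := mul_lt_mul_of_pos_left h1 hn1
    rwa [mul_one_div, div_self hn1.ne'] at this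
  have hfloor : ⌊1/δ⌋ = (n:ℤ) := by
    rw [Int.floor_eq_iff]
    constructor
    · rw [le_div_iff₀ hδ0]; push_cast; linarith
    · rw [div_lt_iff₀ hδ0]; push_cast; linarith
  have hE : Efun δ = (((n:ℝ)+1)*δ - 1) * Real.logb 2 (n:ℝ)
      + (1 - (n:ℝ)*δ) * Real.logb 2 ((n:ℝ)+1) := by
    unfold Efun
    rw [hfloor]
    push_cast
    ring
  set A : ℝ := ((n:ℝ)+1) * Real.logb 2 (n:ℝ) - (n:ℝ) * Real.logb 2 ((n:ℝ)+1) - a with hA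
  set B : ℝ := Real.logb 2 ((n:ℝ)+1) - Real.logb 2 (n:ℝ) with hB
  have hlin : Efun δ - a * δ = A * δ + B := by rw [hE, hA, hB]; ring
  have e1 : Efun (1/((n:ℕ):ℝ)) - a * (1/((n:ℕ):ℝ)) = A * (1/(n:ℝ)) + B := by
    rw [Efun_inv n hn, hA, hB]
    field_simp
    ring
  have e2 : Efun (1/(((n:ℕ)+1:ℕ):ℝ)) - a * (1/(((n:ℕ)+1:ℕ):ℝ))
      = A * (1/((n:ℝ)+1)) + B := by
    have := Efun_inv (n+1) (by omega)
    push_cast at this ⊢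
    rw [this, hA, hB]
    field_simp
    ring
  rcases le_or_gt 0 A with hA0 | hA0
  · apply le_max_of_le_right
    rw [hlin, e1]
    have := mul_le_mul_of_nonneg_left h2 hA0
    linarith
  · apply le_max_of_le_left
    rw [hlin, e2]
    have := mul_le_mul_of_nonneg_left h1.le (neg_nonneg.mpr hA0.le)
    nlinarith
  
lemma logb_two_three : (3:ℝ)/2 < Real.logb 2 3 := by
  have h89 : Real.log 8 < Real.log 9 := Real.log_lt_log (by norm_num) (by norm_num)
  have h8 : Real.log 8 = 3 * Real.log 2 := by
    rw [show (8:ℝ) = 2^(3:ℕ) by norm_num, Real.log_pow]; push_cast; ring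
  have h9 : Real.log 9 = 2 * Real.log 3 := by
    rw [show (9:ℝ) = 3^(2:ℕ) by norm_num, Real.log_pow]; push_cast; ring
  rw [Real.logb, lt_div_iff₀ (Real.log_pos one_lt_two)]
  linarith

theorem stmt_11 (a : ℝ) (ha : 0 ≤ a) (t : ℕ) (ht : 3 ≤ t) :
    ∃ s : ℕ, 3 ≤ s ∧ s ≤ t ∧ (1 / (s:ℝ)) ∈ Set.Ico (1 / (t:ℝ)) 1 ∧
      ∀ δ ∈ Set.Ico (1 / (t:ℝ)) 1,
        Efun δ - a * δ ≤ Efun (1 / (s:ℝ)) - a * (1 / (s:ℝ)) := by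
  set g : ℕ → ℝ := fun m => Efun (1/(m:ℝ)) - a * (1/(m:ℝ)) with hg
  obtain ⟨s, hs_mem, hs_max⟩ :=
    (Finset.Icc 3 t).exists_max_image g (Finset.nonempty_Icc.mpr ht)
  rw [Finset.mem_Icc] at hs_mem
  obtain ⟨hs3, hst⟩ := hs_mem
  have ht0 : (0:ℝ) < t := by have : 0 < t := by omega
                             exact_mod_cast this
  have hs0 : (0:ℝ) < s := by have : 0 < s := by omega
                             exact_mod_cast this
  -- g 1 ≤ g 3 and g 2 ≤ g 3
  have hlog3 : (3:ℝ)/2 < Real.logb 2 3 := logb_two_three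
  have hg3 : g 3 = Real.logb 2 3 / 3 - a * (1/3) := by
    simp only [hg]
    rw [Efun_inv 3 (by norm_num)]
    norm_num
  have hg1 : g 1 ≤ g 3 := by
    have h1 : g 1 = -a := by
      simp only [hg]
      rw [Efun_inv 1 (by norm_num)]
      norm_num
    have hl3 : (0:ℝ) ≤ Real.logb 2 3 := Real.logb_nonneg one_lt_two (by norm_num)
    rw [h1, hg3]; linarith
  have hg2 : g 2 ≤ g 3 := by
    have h2 : g 2 = 1/2 - a * (1/2) := by
      simp only [hg]
      rw [Efun_inv 2 (by norm_num)]
      norm_num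
    rw [h2, hg3]; linarith
  have hle : ∀ m : ℕ, 1 ≤ m → m ≤ t → g m ≤ g s := by
    intro m hm1 hmt
    rcases le_or_gt 3 m with hm3 | hm3
    · exact hs_max m (Finset.mem_Icc.mpr ⟨hm3, hmt⟩)
    · have h3 : g 3 ≤ g s := hs_max 3 (Finset.mem_Icc.mpr ⟨le_refl 3, ht⟩)
      interval_cases m
      · exact le_trans hg1 h3
      · exact le_trans hg2 h3
  refine ⟨s, hs3, hst, ⟨?_, ?_⟩, ?_⟩
  · apply one_div_le_one_div_of_le hs0
    exact_mod_cast hst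
  · rw [div_lt_one hs0]
    exact_mod_cast lt_of_lt_of_le (by norm_num) hs3
  · rintro δ ⟨hδl, hδu⟩
    have hδ0 : 0 < δ := lt_of_lt_of_le (by positivity) hδl
    rcases eq_or_lt_of_le hδl with heq | hlt
    · rw [← heq]
      exact hle t (by omega) le_rfl
    · -- 1/t < δ < 1
      have hinv1 : 1 < 1/δ := by rw [lt_div_iff₀ hδ0]; linarith
      have hinvt : 1/δ < (t:ℝ) := by
        rw [div_lt_iff₀ hδ0]
        have : 1/(t:ℝ) * (t:ℝ) < δ * t := by
          apply mul_lt_mul_of_pos_right hlt ht0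
        rw [one_div_mul_cancel ht0.ne'] at this
        linarith [mul_comm δ (t:ℝ)]
      set n : ℕ := (⌊1/δ⌋).toNat with hn
      have hnz : (n:ℤ) = ⌊1/δ⌋ := by
        rw [hn, Int.toNat_of_nonneg]
        exact Int.le_floor.mpr (by push_cast; positivity)
      have hn1 : 1 ≤ n := by
        have : (1:ℤ) ≤ ⌊1/δ⌋ := Int.le_floor.mpr (by exact_mod_cast hinv1.le)
        omega
      have hnt : n + 1 ≤ t := by
        have h1 : (⌊1/δ⌋ : ℝ) ≤ 1/δ := Int.floor_le _
        have : ((n:ℤ):ℝ) < (t:ℝ) := by rw [hnz]; linarith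
        have : (n:ℤ) < (t:ℤ) := by exact_mod_cast this
        omega
      have hub : δ ≤ 1 / (n:ℝ) := by
        have h1 : ((n:ℤ):ℝ) ≤ 1/δ := by rw [hnz]; exact Int.floor_le _
        have hn0 : (0:ℝ) < n := by exact_mod_cast hn1
        have := one_div_le_one_div_of_le hn0 (by exact_mod_cast h1)
        rwa [one_div_one_div] at this
      have hlb : 1 / ((n:ℝ)+1) < δ := by
        have h1 : 1/δ < ((n:ℤ):ℝ) + 1 := by rw [hnz]; exact Int.lt_floor_add_one _
        have := one_div_lt_one_div_of_lt (by positivity) (by exact_mod_cast h1 : 1/δ < (n:ℝ)+1)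
        rwa [one_div_one_div] at this
      have hp := piece a n hn1 δ hlb hub
      have hgn : g n ≤ g s := hle n hn1 (by omega)
      have hgn1 : g (n+1) ≤ g s := hle (n+1) (by omega) hnt
      simp only [hg] at hgn hgn1 ⊢
      push_cast at hp hgn hgn1 ⊢
      exact le_trans hp (max_le hgn1 hgn)
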